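/- Assume g ∈ C²([0,∞)) satisfies (D1) g(t)>0, g'(t)≤0 and g''(t)≥0, (D2) g ∉ L¹(0,∞), and (D3) |d_t^k g(t)| ≤ C_k g(t)(1/(1+t))^k for k=1,2. Set h(t) = 1 − g'(t)/2. Then there exists C > 0 such that for every ξ, every C² solution û(·,ξ) of the Fourier-transformed equation, and all s ≤ t such that g(τ)²|ξ|² ≤ 3h(τ) for all τ ∈ [s,t]: for real r ≥ 1, |ξ|^r |û(t,ξ)| ≤ C exp( −(|ξ|²/2)∫_s^t g(τ)dτ )( |ξ|^r|û(s,ξ)| + |ξ|^{r−1}|û_t(s,ξ)| ), and for real r ≥ 0, |ξ|^r |û_t(t,ξ)| ≤ C exp( −(|ξ|²/2)∫_s^t g(τ)dτ )( |ξ|^{r+1}|û(s,ξ)| + |ξ|^{r}|û_t(s,ξ)| ). -/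

import Mathlib

open Set MeasureTheory

set_option maxHeartbeats 1000000

lemma stmt13_core
    (g g' g'' : ℝ → ℝ)
    (hg_deriv : ∀ t ∈ Ici (0:ℝ), HasDerivWithinAt g (g' t) (Ici 0) t)
    (hg_deriv' : ∀ t ∈ Ici (0:ℝ), HasDerivWithinAt g' (g'' t) (Ici 0) t)
    (hD1 : ∀ t ∈ Ici (0:ℝ), 0 < g t ∧ g' t ≤ 0 ∧ 0 ≤ g'' t)
    (H : ℝ) (hH : ∀ τ ∈ Ici (0:ℝ), 1 - g' τ / 2 ≤ H)
    (k : ℝ) (hk : 0 ≤ k)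
    (u u' u'' : ℝ → ℂ)
    (hu : ∀ t ∈ Ici (0:ℝ), HasDerivWithinAt u (u' t) (Ici 0) t)
    (hu' : ∀ t ∈ Ici (0:ℝ), HasDerivWithinAt u' (u'' t) (Ici 0) t)
    (heq : ∀ t ∈ Ici (0:ℝ), u'' t + (k:ℂ)^2 * u t + (g t : ℂ) * (k:ℂ)^2 * u' t = 0)
    (s t : ℝ) (hs : 0 ≤ s) (hst : s ≤ t)
    (hzone : ∀ τ ∈ Icc s t, g τ ^ 2 * k ^ 2 ≤ 3 * (1 - g' τ / 2)) :
    k * ‖u t‖ ≤ 2 * (Real.exp (3*H/2) * (Real.sqrt H + 1 + Real.sqrt (3*H)/2)) *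
        Real.exp (-(k ^ 2 / 2) * ∫ τ in s..t, g τ) * (k * ‖u s‖ + ‖u' s‖) ∧
    ‖u' t‖ ≤ (1 + Real.sqrt (3*H)) * (Real.exp (3*H/2) * (Real.sqrt H + 1 + Real.sqrt (3*H)/2)) *
        Real.exp (-(k ^ 2 / 2) * ∫ τ in s..t, g τ) * (k * ‖u s‖ + ‖u' s‖) := by
  have hIci : Icc s t ⊆ Ici (0:ℝ) := fun x hx => le_trans hs hx.1
  have hgc : ContinuousOn g (Ici 0) := fun x hx => (hg_deriv x hx).continuousWithinAt
  have hg'c : ContinuousOn g' (Ici 0) := fun x hx => (hg_deriv' x hx).continuousWithinAt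
  have huc : ContinuousOn u (Ici 0) := fun x hx => (hu x hx).continuousWithinAt
  have hu'c : ContinuousOn u' (Ici 0) := fun x hx => (hu' x hx).continuousWithinAt
  set k2 : ℝ := k^2 with hk2def
  have hk2 : 0 ≤ k2 := sq_nonneg k
  set G : ℝ → ℝ := fun τ => ∫ x in s..τ, g x with hGdef
  set φ : ℝ → ℝ := fun τ => k2/2 * G τ with hphidef
  set B : ℝ → ℝ := fun τ => g τ * (k2/2) with hBdef
  set V : ℝ → ℂ := fun τ => (Real.exp (φ τ) : ℂ) * u τ with hVdef
  set W : ℝ → ℂ := fun τ => (Real.exp (φ τ) : ℂ) * (u' τ + (B τ : ℂ) * u τ) with hWdef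
  set m : ℝ → ℝ := fun τ => k2 * (1 - g' τ / 2) - g τ ^ 2 * (k2 ^ 2 / 4) with hmdef
  set Φ : ℝ → ℝ := fun τ => k2 * (g s ^ 2 - g τ ^ 2) with hPhidef
  set N : ℂ → ℝ := fun z => z.re ^ 2 + z.im ^ 2 with hNdef
  set E : ℝ → ℝ := fun τ => m τ * N (V τ) + N (W τ) with hEdef
  set D : ℝ → ℝ := fun τ => E τ * Real.exp (-Φ τ) with hDdef
  clear_value k2 G φ B V W m Φ N E D
  have hNnorm : ∀ z : ℂ, N z = ‖z‖^2 := by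
    intro z
    rw [hNdef]
    simp only [Complex.sq_norm, Complex.normSq_apply]
    ring
  have hNnonneg : ∀ z : ℂ, 0 ≤ N z := fun z => by rw [hNnorm]; positivity
  -- m lower bound on the zone
  have hm_ge : ∀ τ ∈ Icc s t, k2/4 ≤ m τ := by
    intro τ hτ
    have hz := hzone τ hτ
    have hg'τ := (hD1 τ (hIci hτ)).2.1
    have h2 : g τ ^ 2 * k2 * k2 ≤ 3 * (1 - g' τ / 2) * k2 :=
      mul_le_mul_of_nonneg_right hz hk2
    have h3 : 0 ≤ (-(g' τ) / 2) * k2 :=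
      mul_nonneg (by linarith) hk2
    rw [hmdef]
    nlinarith [h2, h3]
  -- derivatives at interior points
  have hDerAt : ∀ x ∈ Ioo s t, ∃ d : ℝ, HasDerivAt D d x ∧ d ≤ 0 := by
    intro x hx
    have hx0 : (0:ℝ) < x := lt_of_le_of_lt hs hx.1
    have hxI : x ∈ Ici (0:ℝ) := le_of_lt hx0
    have hnhds : Ici (0:ℝ) ∈ nhds x := Ici_mem_nhds hx0
    have hgx : HasDerivAt g (g' x) x := (hg_deriv x hxI).hasDerivAt hnhds
    have hg'x : HasDerivAt g' (g'' x) x := (hg_deriv' x hxI).hasDerivAt hnhds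
    have hux : HasDerivAt u (u' x) x := (hu x hxI).hasDerivAt hnhds
    have hu'x : HasDerivAt u' (u'' x) x := (hu' x hxI).hasDerivAt hnhds
    -- FTC
    have hgint : IntervalIntegrable g volume s x := by
      apply ContinuousOn.intervalIntegrable
      apply hgc.mono
      rw [uIcc_of_le (le_of_lt hx.1)]
      exact fun y hy => le_trans hs hy.1
    have hGx : HasDerivAt G (g x) x := by
      rw [hGdef]
      apply intervalIntegral.integral_hasDerivAt_right hgint
      · exact ContinuousOn.stronglyMeasurableAtFilter isOpen_Ioi
          (hgc.mono Ioi_subset_Ici_self) x hx0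
      · exact hgc.continuousAt hnhds
    -- derivative of φ
    have hphix : HasDerivAt φ (B x) x := by
      have := hGx.const_mul (k2/2)
      rw [hphidef, hBdef]
      refine this.congr_deriv ?_
      ring
    have hexpx : HasDerivAt (fun τ => Real.exp (φ τ)) (Real.exp (φ x) * B x) x := by
      simpa [mul_comm] using hphix.exp
    have hexpC : HasDerivAt (fun τ => ((Real.exp (φ τ) : ℝ) : ℂ))
        ((Real.exp (φ x) * B x : ℝ) : ℂ) x := hexpx.ofReal_comp
    -- derivative of V
    have hVx : HasDerivAt V (W x) x := by
      have h1 := hexpC.mul hux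
      rw [hVdef, hWdef]
      refine h1.congr_deriv ?_
      push_cast
      ring
    -- derivative of B (complex)
    have hBx : HasDerivAt B (g' x * (k2/2)) x := hBdef ▸ hgx.mul_const (k2/2)
    have hBC : HasDerivAt (fun τ => ((B τ : ℝ) : ℂ)) ((g' x * (k2/2) : ℝ) : ℂ) x :=
      hBx.ofReal_comp
    -- the equation at x
    have hEqx : u'' x = -((k2:ℝ):ℂ) * u x - ((g x : ℝ):ℂ) * ((k2:ℝ):ℂ) * u' x := by
      have h0 := heq x hxI
      rw [hk2def]
      push_cast
      linear_combination h0
    -- derivative of W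
    have hWx : HasDerivAt W (((-(m x) : ℝ) : ℂ) * V x) x := by
      have hinner : HasDerivAt (fun τ => u' τ + ((B τ : ℝ):ℂ) * u τ)
          (u'' x + (((g' x * (k2/2) : ℝ):ℂ) * u x + ((B x : ℝ):ℂ) * u' x)) x :=
        hu'x.add (hBC.mul hux)
      have h1 := hexpC.mul hinner
      rw [hWdef, hVdef]
      refine h1.congr_deriv ?_
      rw [hEqx, hmdef, hBdef]
      push_cast
      ring
    -- derivatives of real components
    have hVre : HasDerivAt (fun τ => (V τ).re) ((W x).re) x :=
      (Complex.reCLM.hasFDerivAt.comp_hasDerivAt x hVx)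
    have hVim : HasDerivAt (fun τ => (V τ).im) ((W x).im) x :=
      (Complex.imCLM.hasFDerivAt.comp_hasDerivAt x hVx)
    have hWre : HasDerivAt (fun τ => (W τ).re) ((((-(m x) : ℝ) : ℂ) * V x).re) x :=
      (Complex.reCLM.hasFDerivAt.comp_hasDerivAt x hWx)
    have hWim : HasDerivAt (fun τ => (W τ).im) ((((-(m x) : ℝ) : ℂ) * V x).im) x :=
      (Complex.imCLM.hasFDerivAt.comp_hasDerivAt x hWx)
    -- derivative of m and Φ
    have hmx : HasDerivAt m (k2 * (-(g'' x / 2)) - 2 * g x * g' x * (k2^2/4)) x := by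
      rw [hmdef]
      have h1 : HasDerivAt (fun τ => k2 * (1 - g' τ / 2)) (k2 * (-(g'' x / 2))) x :=
        (((hg'x.div_const 2).const_sub 1).const_mul k2)
      have h2 : HasDerivAt (fun τ => g τ ^ 2 * (k2^2/4)) (2 * g x * g' x * (k2^2/4)) x := by
        have := (hgx.pow 2).mul_const (k2^2/4)
        refine this.congr_deriv ?_
        ring
      exact h1.sub h2
    have hPhix : HasDerivAt Φ (k2 * (-(2 * g x * g' x))) x := by
      rw [hPhidef]
      have h2 : HasDerivAt (fun τ => g s ^ 2 - g τ ^ 2) (-(2 * g x * g' x)) x := by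
        have := (hgx.pow 2).const_sub (g s ^ 2)
        refine this.congr_deriv ?_
        ring
      exact h2.const_mul k2
    have hexpPhix : HasDerivAt (fun τ => Real.exp (-Φ τ))
        (Real.exp (-Φ x) * (-(k2 * (-(2 * g x * g' x))))) x := by
      simpa [mul_comm] using hPhix.neg.exp
    -- derivative of E
    have hNVx : HasDerivAt (fun τ => N (V τ))
        (2 * (V x).re * (W x).re + 2 * (V x).im * (W x).im) x := by
      rw [hNdef]
      have h1 := hVre.pow 2
      have h2 := hVim.pow 2
      refine (h1.add h2).congr_deriv ?_
      simp only [Nat.cast_ofNat, pow_one]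
      ring
    have hNWx : HasDerivAt (fun τ => N (W τ))
        (2 * (W x).re * ((((-(m x) : ℝ) : ℂ) * V x).re)
          + 2 * (W x).im * ((((-(m x) : ℝ) : ℂ) * V x).im)) x := by
      rw [hNdef]
      have h1 := hWre.pow 2
      have h2 := hWim.pow 2
      refine (h1.add h2).congr_deriv ?_
      simp only [Nat.cast_ofNat, pow_one]
      ring
    have hEx : HasDerivAt E
        ((k2 * (-(g'' x / 2)) - 2 * g x * g' x * (k2^2/4)) * N (V x)
          + m x * (2 * (V x).re * (W x).re + 2 * (V x).im * (W x).im)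
          + (2 * (W x).re * ((((-(m x) : ℝ) : ℂ) * V x).re)
            + 2 * (W x).im * ((((-(m x) : ℝ) : ℂ) * V x).im))) x := by
      rw [hEdef]
      exact (hmx.mul hNVx).add hNWx
    -- the derivative of E simplifies
    have hre : ((((-(m x) : ℝ) : ℂ) * V x).re) = -(m x) * (V x).re := by
      simp [Complex.re_ofReal_mul]
    have him : ((((-(m x) : ℝ) : ℂ) * V x).im) = -(m x) * (V x).im := by
      simp [Complex.im_ofReal_mul]
    have hEx' : HasDerivAt E
        ((k2 * (-(g'' x / 2)) - 2 * g x * g' x * (k2^2/4)) * N (V x)) x := by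
      convert hEx using 1
      rw [hre, him]
      ring
    -- derivative of D
    have hDx : HasDerivAt D
        ((k2 * (-(g'' x / 2)) - 2 * g x * g' x * (k2^2/4)) * N (V x) * Real.exp (-Φ x)
          + E x * (Real.exp (-Φ x) * (-(k2 * (-(2 * g x * g' x)))))) x := by
      rw [hDdef]
      exact hEx'.mul hexpPhix
    refine ⟨_, hDx, ?_⟩
    -- nonpositivity of the derivative
    have hxIcc : x ∈ Icc s t := ⟨le_of_lt hx.1, le_of_lt hx.2⟩
    have hmge := hm_ge x hxIcc
    have hgpos := (hD1 x hxI).1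
    have hg'np := (hD1 x hxI).2.1
    have hg''nn := (hD1 x hxI).2.2
    have hNV := hNnonneg (V x)
    have hNW := hNnonneg (W x)
    have hexpPos : 0 < Real.exp (-Φ x) := Real.exp_pos _
    have hEdefx : E x = m x * N (V x) + N (W x) := by rw [hEdef]
    -- key inequality : E' ≤ Φ' * E, i.e. derivative of D nonpos
    have hΦp : 0 ≤ k2 * -(2 * g x * g' x) := by
      nlinarith [mul_nonneg (mul_nonneg hk2 hgpos.le) (neg_nonneg.mpr hg'np)]
    have hA : (k2 * -(g'' x / 2) - 2 * g x * g' x * (k2^2/4)) * N (V x)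
        ≤ (k2 * -(2 * g x * g' x)) * (k2/4 * N (V x)) := by
      have h9 : 0 ≤ k2 * g'' x * N (V x) := mul_nonneg (mul_nonneg hk2 hg''nn) hNV
      nlinarith [h9, sq_nonneg k2]
    have hE' : k2/4 * N (V x) ≤ E x := by
      rw [hEdefx]
      nlinarith [mul_le_mul_of_nonneg_right hmge hNV]
    have key : (k2 * -(g'' x / 2) - 2 * g x * g' x * (k2^2/4)) * N (V x)
        ≤ (k2 * -(2 * g x * g' x)) * E x :=
      le_trans hA (mul_le_mul_of_nonneg_left hE' hΦp)
    nlinarith [mul_le_mul_of_nonneg_right key hexpPos.le]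
  -- continuity of D on [s,t]
  have hgcI : ContinuousOn g (Icc s t) := hgc.mono hIci
  have hGc : ContinuousOn G (Icc s t) := by
    rw [hGdef]
    have h1 : IntervalIntegrable g volume s t := by
      apply ContinuousOn.intervalIntegrable
      apply hgc.mono
      rw [uIcc_of_le hst]; exact hIci
    have h2 := intervalIntegral.continuousOn_primitive_interval' h1 left_mem_uIcc
    rwa [uIcc_of_le hst] at h2
  have hφc : ContinuousOn φ (Icc s t) := by
    rw [hphidef]; exact continuousOn_const.mul hGc
  have hexpφC : ContinuousOn (fun τ => ((Real.exp (φ τ):ℝ):ℂ)) (Icc s t) :=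
    Complex.continuous_ofReal.comp_continuousOn (Real.continuous_exp.comp_continuousOn hφc)
  have hVc : ContinuousOn V (Icc s t) := by
    rw [hVdef]; exact hexpφC.mul (huc.mono hIci)
  have hBc : ContinuousOn B (Icc s t) := by
    rw [hBdef]; exact hgcI.mul continuousOn_const
  have hWc : ContinuousOn W (Icc s t) := by
    rw [hWdef]
    exact hexpφC.mul ((hu'c.mono hIci).add
      ((Complex.continuous_ofReal.comp_continuousOn hBc).mul (huc.mono hIci)))
  have hNc : ∀ (f : ℝ → ℂ), ContinuousOn f (Icc s t) →
      ContinuousOn (fun τ => N (f τ)) (Icc s t) := by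
    intro f hf
    rw [hNdef]
    exact ((Complex.continuous_re.comp_continuousOn hf).pow 2).add
      ((Complex.continuous_im.comp_continuousOn hf).pow 2)
  have hmc : ContinuousOn m (Icc s t) := by
    rw [hmdef]
    exact (continuousOn_const.mul (continuousOn_const.sub
      ((hg'c.mono hIci).div_const 2))).sub ((hgcI.pow 2).mul continuousOn_const)
  have hEc : ContinuousOn E (Icc s t) := by
    rw [hEdef]; exact (hmc.mul (hNc V hVc)).add (hNc W hWc)
  have hΦc : ContinuousOn Φ (Icc s t) := by
    rw [hPhidef]
    exact continuousOn_const.mul (continuousOn_const.sub (hgcI.pow 2))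
  have hDc : ContinuousOn D (Icc s t) := by
    rw [hDdef]
    exact hEc.mul (Real.continuous_exp.comp_continuousOn hΦc.neg)
  -- D is antitone
  have hanti : AntitoneOn D (Icc s t) := by
    apply antitoneOn_of_deriv_nonpos (convex_Icc s t) hDc
    · intro x hx
      rw [interior_Icc] at hx
      obtain ⟨d, hd, _⟩ := hDerAt x hx
      exact hd.differentiableAt.differentiableWithinAt
    · intro x hx
      rw [interior_Icc] at hx
      obtain ⟨d, hd, hd0⟩ := hDerAt x hx
      rw [hd.deriv]; exact hd0
  have hsIcc : s ∈ Icc s t := ⟨le_rfl, hst⟩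
  have htIcc : t ∈ Icc s t := ⟨hst, le_rfl⟩
  have hsI : s ∈ Ici (0:ℝ) := hs
  have htI : t ∈ Ici (0:ℝ) := hIci htIcc
  have hDts : D t ≤ D s := hanti hsIcc htIcc hst
  -- values at s
  have hGs : G s = 0 := by rw [hGdef]; exact intervalIntegral.integral_same
  have hφs : φ s = 0 := by simp only [hphidef]; rw [hGs]; ring
  have hΦs : Φ s = 0 := by simp only [hPhidef]; ring
  have hVs : V s = u s := by simp only [hVdef]; rw [hφs]; simp
  have hWs : W s = u' s + (B s:ℂ) * u s := by simp only [hWdef]; rw [hφs]; simp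
  have hEt_le : E t ≤ Real.exp (Φ t) * E s := by
    have h1 : D t ≤ E s := by
      have h0 : D s = E s := by simp only [hDdef]; rw [hΦs]; simp
      linarith [hDts]
    have h2 : E t = D t * Real.exp (Φ t) := by
      simp only [hDdef]
      rw [mul_assoc, ← Real.exp_add]
      simp
    rw [h2]
    calc D t * Real.exp (Φ t) ≤ E s * Real.exp (Φ t) :=
          mul_le_mul_of_nonneg_right h1 (Real.exp_pos _).le
      _ = Real.exp (Φ t) * E s := by ring
  -- basic bounds
  have h1H : (1:ℝ) ≤ H := le_trans (by linarith [(hD1 s hsI).2.1]) (hH s hsI)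
  have hHnn : (0:ℝ) ≤ H := by linarith
  have hΦt : Φ t ≤ 3 * H := by
    simp only [hPhidef]
    have hz := hzone s hsIcc
    nlinarith [mul_nonneg hk2 (sq_nonneg (g t)), hH s hsI]
  have hgsk : g s * k ≤ Real.sqrt (3*H) := by
    apply Real.le_sqrt_of_sq_le
    have hz := hzone s hsIcc
    rw [hk2def] at hz
    nlinarith [hH s hsI]
  have hgtk : g t * k ≤ Real.sqrt (3*H) := by
    apply Real.le_sqrt_of_sq_le
    have hz := hzone t htIcc
    rw [hk2def] at hz
    nlinarith [hH t htI]
  have hms : m s ≤ H * k2 := by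
    simp only [hmdef]
    nlinarith [mul_le_mul_of_nonneg_left (hH s hsI) hk2,
      mul_nonneg (sq_nonneg (g s)) (sq_nonneg k2)]
  have hsqH : Real.sqrt H ^ 2 = H := Real.sq_sqrt hHnn
  have hsq3H : Real.sqrt (3*H) ^ 2 = 3*H := Real.sq_sqrt (by linarith)
  have hsqHnn := Real.sqrt_nonneg H
  have hsq3Hnn := Real.sqrt_nonneg (3*H)
  have ha : (0:ℝ) ≤ k * ‖u s‖ := mul_nonneg hk (norm_nonneg _)
  have hb : (0:ℝ) ≤ ‖u' s‖ := norm_nonneg _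
  have hBsnn : 0 ≤ B s := by
    simp only [hBdef]
    exact mul_nonneg (hD1 s hsI).1.le (by linarith)
  have hBtnn : 0 ≤ B t := by
    simp only [hBdef]
    exact mul_nonneg (hD1 t htI).1.le (by linarith)
  -- bound on E s
  have hEs_le : E s ≤ ((Real.sqrt H + 1 + Real.sqrt (3*H)/2) * (k * ‖u s‖ + ‖u' s‖))^2 := by
    have hNVs : N (V s) = ‖u s‖^2 := by rw [hVs, hNnorm]
    have hNWs : N (W s) ≤ (‖u' s‖ + Real.sqrt (3*H)/2 * (k * ‖u s‖))^2 := by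
      rw [hWs, hNnorm]
      have h1 : ‖u' s + (B s:ℂ) * u s‖ ≤ ‖u' s‖ + Real.sqrt (3*H)/2 * (k * ‖u s‖) := by
        refine le_trans (norm_add_le _ _) ?_
        rw [norm_mul, Complex.norm_real, Real.norm_eq_abs, abs_of_nonneg hBsnn]
        have h2 : B s * ‖u s‖ ≤ Real.sqrt (3*H)/2 * (k * ‖u s‖) := by
          simp only [hBdef]
          rw [hk2def]
          nlinarith [mul_le_mul_of_nonneg_right hgsk
            (mul_nonneg hk (norm_nonneg (u s))), norm_nonneg (u s)]
        linarith
      exact pow_le_pow_left₀ (norm_nonneg _) h1 2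
    have hEsval : E s = m s * N (V s) + N (W s) := by simp only [hEdef]
    rw [hEsval, hNVs]
    have hkus : k2 * ‖u s‖^2 = (k * ‖u s‖)^2 := by rw [hk2def]; ring
    nlinarith [mul_le_mul_of_nonneg_right hms (sq_nonneg ‖u s‖),
      mul_nonneg ha hb, mul_nonneg (mul_nonneg hsqHnn ha) hb,
      mul_nonneg (mul_nonneg hsq3Hnn ha) hb,
      mul_nonneg (mul_nonneg (mul_nonneg hsqHnn hsq3Hnn) ha) ha,
      mul_nonneg (mul_nonneg (mul_nonneg hsqHnn hsq3Hnn) ha) hb,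
      mul_nonneg (mul_nonneg (mul_nonneg hsqHnn hsq3Hnn) hb) hb,
      sq_nonneg (k*‖u s‖ + ‖u' s‖), sq_nonneg (Real.sqrt H * (k*‖u s‖)),
      mul_nonneg (mul_nonneg hsqHnn ha) ha, mul_nonneg (mul_nonneg hsq3Hnn ha) ha,
      mul_nonneg (mul_nonneg hsq3Hnn hb) hb, mul_nonneg (mul_nonneg hsqHnn hb) hb]
  have hEs_nn : 0 ≤ E s := by
    simp only [hEdef]
    have hmsnn : 0 ≤ m s := le_trans (by positivity) (hm_ge s hsIcc)
    exact add_nonneg (mul_nonneg hmsnn (hNnonneg _)) (hNnonneg _)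
  -- bound E t
  have hEt_le3 : E t ≤ (Real.exp (3*H/2) *
      ((Real.sqrt H + 1 + Real.sqrt (3*H)/2) * (k * ‖u s‖ + ‖u' s‖)))^2 := by
    have h1 : Real.exp (Φ t) ≤ Real.exp (3*H) := Real.exp_le_exp.mpr hΦt
    have h2 : E t ≤ Real.exp (3*H) *
        ((Real.sqrt H + 1 + Real.sqrt (3*H)/2) * (k * ‖u s‖ + ‖u' s‖))^2 :=
      le_trans hEt_le (mul_le_mul h1 hEs_le hEs_nn (Real.exp_pos _).le)
    have h3 : Real.exp (3*H) = Real.exp (3*H/2)^2 := by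
      rw [sq, ← Real.exp_add]; congr 1; ring
    rw [h3] at h2
    calc E t ≤ _ := h2
      _ = _ := by ring
  have hsqEt : Real.sqrt (E t) ≤ Real.exp (3*H/2) *
      ((Real.sqrt H + 1 + Real.sqrt (3*H)/2) * (k * ‖u s‖ + ‖u' s‖)) := by
    have h1 := Real.sqrt_le_sqrt hEt_le3
    rwa [Real.sqrt_sq (by positivity)] at h1
  -- extract component bounds at t
  have hWtE : ‖W t‖^2 ≤ E t := by
    simp only [hEdef]
    have h1 : 0 ≤ m t := le_trans (by positivity) (hm_ge t htIcc)
    have h2 := mul_nonneg h1 (hNnonneg (V t))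
    rw [← hNnorm]
    linarith
  have hVtE : (k * ‖V t‖)^2 ≤ 4 * E t := by
    simp only [hEdef]
    have h1 := mul_le_mul_of_nonneg_right (hm_ge t htIcc) (hNnonneg (V t))
    have h2 := hNnorm (V t)
    have h3 := hNnonneg (W t)
    rw [hk2def] at h1
    nlinarith
  have hWt : ‖W t‖ ≤ Real.exp (3*H/2) *
      ((Real.sqrt H + 1 + Real.sqrt (3*H)/2) * (k * ‖u s‖ + ‖u' s‖)) := by
    have h1 : ‖W t‖ ≤ Real.sqrt (E t) := by
      rw [← Real.sqrt_sq (norm_nonneg (W t))]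
      exact Real.sqrt_le_sqrt hWtE
    linarith
  have hVt : k * ‖V t‖ ≤ 2 * (Real.exp (3*H/2) *
      ((Real.sqrt H + 1 + Real.sqrt (3*H)/2) * (k * ‖u s‖ + ‖u' s‖))) := by
    have h2 := Real.sqrt_le_sqrt hVtE
    rw [Real.sqrt_sq (by positivity)] at h2
    have h3 : Real.sqrt (4 * E t) = 2 * Real.sqrt (E t) := by
      rw [show (4:ℝ) * E t = 2^2 * E t by norm_num, Real.sqrt_mul (by positivity),
        Real.sqrt_sq (by norm_num)]
    rw [h3] at h2
    linarith
  -- relation between u, V, W at t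
  have hVtnorm : ‖V t‖ = Real.exp (φ t) * ‖u t‖ := by
    simp only [hVdef]
    rw [norm_mul, Complex.norm_real, Real.norm_eq_abs, abs_of_pos (Real.exp_pos _)]
  have hexpneg : Real.exp (-(k ^ 2 / 2) * ∫ τ in s..t, g τ) = Real.exp (-φ t) := by
    congr 1
    simp only [hphidef, hGdef, hk2def]
    ring
  have hut : k * ‖u t‖ = Real.exp (-φ t) * (k * ‖V t‖) := by
    rw [hVtnorm, Real.exp_neg]
    have he := Real.exp_pos (φ t)
    field_simp
  have hconc1 : k * ‖u t‖ ≤ 2 * (Real.exp (3*H/2) * (Real.sqrt H + 1 + Real.sqrt (3*H)/2)) *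
      Real.exp (-(k ^ 2 / 2) * ∫ τ in s..t, g τ) * (k * ‖u s‖ + ‖u' s‖) := by
    rw [hexpneg, hut]
    calc Real.exp (-φ t) * (k * ‖V t‖)
        ≤ Real.exp (-φ t) * (2 * (Real.exp (3*H/2) *
          ((Real.sqrt H + 1 + Real.sqrt (3*H)/2) * (k * ‖u s‖ + ‖u' s‖)))) :=
          mul_le_mul_of_nonneg_left hVt (Real.exp_pos _).le
      _ = 2 * (Real.exp (3*H/2) * (Real.sqrt H + 1 + Real.sqrt (3*H)/2)) *
          Real.exp (-φ t) * (k * ‖u s‖ + ‖u' s‖) := by ring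
  rw [hk2def]
  refine ⟨hconc1, ?_⟩
  -- second conclusion
  have hee : (Real.exp (-φ t):ℂ) * (Real.exp (φ t):ℂ) = 1 := by
    rw [← Complex.ofReal_mul, ← Real.exp_add]
    norm_num
  have hu't : u' t = (Real.exp (-φ t):ℂ) * W t - (B t:ℂ) * u t := by
    simp only [hWdef]
    rw [← mul_assoc, hee]
    ring
  have hnorm2 : ‖u' t‖ ≤ Real.exp (-φ t) * ‖W t‖ + B t * ‖u t‖ := by
    rw [hu't]
    refine le_trans (norm_sub_le _ _) ?_
    rw [norm_mul, norm_mul, Complex.norm_real, Complex.norm_real, Real.norm_eq_abs,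
      Real.norm_eq_abs, abs_of_pos (Real.exp_pos _), abs_of_nonneg hBtnn]
  have hBt_bound : B t * ‖u t‖ ≤ Real.sqrt (3*H)/2 * (k * ‖u t‖) := by
    simp only [hBdef]
    rw [hk2def]
    linarith only [mul_le_mul_of_nonneg_right hgtk (mul_nonneg hk (norm_nonneg (u t)))]
  have h5 : Real.exp (-φ t) * ‖W t‖ ≤ Real.exp (-φ t) * (Real.exp (3*H/2) *
      ((Real.sqrt H + 1 + Real.sqrt (3*H)/2) * (k * ‖u s‖ + ‖u' s‖))) :=
    mul_le_mul_of_nonneg_left hWt (Real.exp_pos _).le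
  have h6 : Real.sqrt (3*H)/2 * (k * ‖u t‖) ≤ Real.sqrt (3*H)/2 *
      (2 * (Real.exp (3*H/2) * (Real.sqrt H + 1 + Real.sqrt (3*H)/2)) *
      Real.exp (-(k ^ 2 / 2) * ∫ τ in s..t, g τ) * (k * ‖u s‖ + ‖u' s‖)) :=
    mul_le_mul_of_nonneg_left hconc1 (by positivity)
  rw [hexpneg] at h6 ⊢
  calc ‖u' t‖ ≤ Real.exp (-φ t) * ‖W t‖ + B t * ‖u t‖ := hnorm2
    _ ≤ Real.exp (-φ t) * (Real.exp (3*H/2) *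
          ((Real.sqrt H + 1 + Real.sqrt (3*H)/2) * (k * ‖u s‖ + ‖u' s‖)))
        + Real.sqrt (3*H)/2 * (2 * (Real.exp (3*H/2) * (Real.sqrt H + 1 + Real.sqrt (3*H)/2)) *
          Real.exp (-φ t) * (k * ‖u s‖ + ‖u' s‖)) :=
        add_le_add h5 (le_trans hBt_bound h6)
    _ = (1 + Real.sqrt (3*H)) * (Real.exp (3*H/2) * (Real.sqrt H + 1 + Real.sqrt (3*H)/2)) *
          Real.exp (-φ t) * (k * ‖u s‖ + ‖u' s‖) := by ring

theorem stmt_13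
    (n : ℕ)
    (g g' g'' : ℝ → ℝ)
    (hg_deriv : ∀ t ∈ Ici (0:ℝ), HasDerivWithinAt g (g' t) (Ici 0) t)
    (hg_deriv' : ∀ t ∈ Ici (0:ℝ), HasDerivWithinAt g' (g'' t) (Ici 0) t)
    (hg_cont : ContinuousOn g'' (Ici 0))
    (hD1 : ∀ t ∈ Ici (0:ℝ), 0 < g t ∧ g' t ≤ 0 ∧ 0 ≤ g'' t)
    (hD2 : ¬ IntegrableOn g (Ici 0))
    (hD3 : ∃ C₁ > (0:ℝ), ∃ C₂ > (0:ℝ), ∀ t ∈ Ici (0:ℝ),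
      |g' t| ≤ C₁ * g t * (1 / (1 + t)) ∧ |g'' t| ≤ C₂ * g t * (1 / (1 + t)) ^ 2)
    :
    ∃ C > (0:ℝ),
      ∀ (ξ : EuclideanSpace ℝ (Fin n)),
      ∀ (u u' u'' : ℝ → ℂ),
      (∀ t ∈ Ici (0:ℝ), HasDerivWithinAt u (u' t) (Ici 0) t) →
      (∀ t ∈ Ici (0:ℝ), HasDerivWithinAt u' (u'' t) (Ici 0) t) →
      ContinuousOn u'' (Ici 0) →
      (∀ t ∈ Ici (0:ℝ),
        u'' t + (‖ξ‖ : ℂ) ^ 2 * u t + (g t : ℂ) * (‖ξ‖ : ℂ) ^ 2 * u' t = 0) →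
      ∀ s t : ℝ, 0 ≤ s → s ≤ t →
        (∀ τ ∈ Icc s t, g τ ^ 2 * ‖ξ‖ ^ 2 ≤ 3 * (1 - g' τ / 2)) →
        (∀ r : ℝ, 1 ≤ r →
          ‖ξ‖ ^ r * ‖u t‖ ≤
            C * Real.exp ((-(‖ξ‖ ^ 2 / 2)) * ∫ τ in s..t, g τ) *
              (‖ξ‖ ^ r * ‖u s‖ + ‖ξ‖ ^ (r - 1) * ‖u' s‖)) ∧
        (∀ r : ℝ, 0 ≤ r →
          ‖ξ‖ ^ r * ‖u' t‖ ≤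
            C * Real.exp ((-(‖ξ‖ ^ 2 / 2)) * ∫ τ in s..t, g τ) *
              (‖ξ‖ ^ (r + 1) * ‖u s‖ + ‖ξ‖ ^ r * ‖u' s‖)) := by
  obtain ⟨C₁, hC₁, C₂, hC₂, hD3'⟩ := hD3
  have hgc : ContinuousOn g (Ici 0) := fun x hx => (hg_deriv x hx).continuousWithinAt
  have hganti : AntitoneOn g (Ici 0) := by
    apply antitoneOn_of_deriv_nonpos (convex_Ici 0) hgc
    · intro x hx
      rw [interior_Ici] at hx
      exact ((hg_deriv x (mem_Ici.mpr (le_of_lt hx))).hasDerivAt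
        (Ici_mem_nhds hx)).differentiableAt.differentiableWithinAt
    · intro x hx
      rw [interior_Ici] at hx
      rw [((hg_deriv x (mem_Ici.mpr (le_of_lt hx))).hasDerivAt (Ici_mem_nhds hx)).deriv]
      exact (hD1 x (mem_Ici.mpr (le_of_lt hx))).2.1
  set H : ℝ := 1 + C₁ * g 0 / 2 with hHdef
  have hH : ∀ τ ∈ Ici (0:ℝ), 1 - g' τ / 2 ≤ H := by
    intro τ hτ
    have hgpos := (hD1 τ hτ).1
    have hg'np := (hD1 τ hτ).2.1
    have habs := (hD3' τ hτ).1
    have hτ0 : (0:ℝ) ≤ τ := hτ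
    have h1 : |g' τ| = -g' τ := abs_of_nonpos hg'np
    have h2 : 1/(1+τ) ≤ 1 := by
      rw [div_le_one (by linarith)]
      linarith
    have h3 : C₁ * g τ * (1/(1+τ)) ≤ C₁ * g τ * 1 :=
      mul_le_mul_of_nonneg_left h2 (by positivity)
    have h4 : g τ ≤ g 0 := hganti (show (0:ℝ) ∈ Ici (0:ℝ) from mem_Ici.mpr le_rfl) hτ hτ0
    have h5 : C₁ * g τ ≤ C₁ * g 0 := mul_le_mul_of_nonneg_left h4 hC₁.le
    rw [hHdef]
    rw [h1] at habs
    linarith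
  refine ⟨(3 + Real.sqrt (3*H)) * (Real.exp (3*H/2) *
    (Real.sqrt H + 1 + Real.sqrt (3*H)/2)) + 1, by positivity, ?_⟩
  intro ξ u u' u'' hu hu' hu'' heq s t hs hst hzone
  obtain ⟨h1, h2⟩ := stmt13_core g g' g'' hg_deriv hg_deriv' hD1 H hH ‖ξ‖ (norm_nonneg ξ)
    u u' u'' hu hu' heq s t hs hst hzone
  have hKnn : (0:ℝ) ≤ Real.exp (3*H/2) * (Real.sqrt H + 1 + Real.sqrt (3*H)/2) := by positivity
  have hAnn : (0:ℝ) ≤ Real.exp (-(‖ξ‖ ^ 2 / 2) * ∫ τ in s..t, g τ) := (Real.exp_pos _).le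
  have hPnn : (0:ℝ) ≤ ‖ξ‖ * ‖u s‖ + ‖u' s‖ := by positivity
  have hs3 : (0:ℝ) ≤ Real.sqrt (3*H) := Real.sqrt_nonneg _
  constructor
  · intro r hr
    have hr0 : (0:ℝ) < r := by linarith
    have hkr : ‖ξ‖ ^ r = ‖ξ‖ ^ (r-1) * ‖ξ‖ := by
      rcases eq_or_lt_of_le (norm_nonneg ξ) with h0 | h0
      · rw [← h0, Real.zero_rpow (ne_of_gt hr0), mul_zero]
      · have he := Real.rpow_add h0 (r-1) 1
        rw [Real.rpow_one] at he
        rw [← he]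
        congr 1
        ring
    have hmul := mul_le_mul_of_nonneg_left h1 (Real.rpow_nonneg (norm_nonneg ξ) (r-1))
    calc ‖ξ‖ ^ r * ‖u t‖ = ‖ξ‖ ^ (r-1) * (‖ξ‖ * ‖u t‖) := by rw [hkr]; ring
      _ ≤ ‖ξ‖ ^ (r-1) * (2 * (Real.exp (3*H/2) * (Real.sqrt H + 1 + Real.sqrt (3*H)/2)) *
          Real.exp (-(‖ξ‖ ^ 2 / 2) * ∫ τ in s..t, g τ) * (‖ξ‖ * ‖u s‖ + ‖u' s‖)) := hmul
      _ = 2 * (Real.exp (3*H/2) * (Real.sqrt H + 1 + Real.sqrt (3*H)/2)) *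
          Real.exp (-(‖ξ‖ ^ 2 / 2) * ∫ τ in s..t, g τ) *
          (‖ξ‖ ^ (r-1) * ‖ξ‖ * ‖u s‖ + ‖ξ‖ ^ (r-1) * ‖u' s‖) := by ring
      _ = 2 * (Real.exp (3*H/2) * (Real.sqrt H + 1 + Real.sqrt (3*H)/2)) *
          Real.exp (-(‖ξ‖ ^ 2 / 2) * ∫ τ in s..t, g τ) *
          (‖ξ‖ ^ r * ‖u s‖ + ‖ξ‖ ^ (r-1) * ‖u' s‖) := by rw [hkr]
      _ ≤ ((3 + Real.sqrt (3*H)) * (Real.exp (3*H/2) *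
          (Real.sqrt H + 1 + Real.sqrt (3*H)/2)) + 1) *
          Real.exp (-(‖ξ‖ ^ 2 / 2) * ∫ τ in s..t, g τ) *
          (‖ξ‖ ^ r * ‖u s‖ + ‖ξ‖ ^ (r-1) * ‖u' s‖) := by
          apply mul_le_mul_of_nonneg_right _ (by positivity)
          apply mul_le_mul_of_nonneg_right _ hAnn
          nlinarith [hKnn, hs3]
  · intro r hr
    have hkr : ‖ξ‖ ^ (r+1) = ‖ξ‖ ^ r * ‖ξ‖ := by
      rcases eq_or_lt_of_le (norm_nonneg ξ) with h0 | h0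
      · rw [← h0, Real.zero_rpow (by positivity : r + 1 ≠ 0), mul_zero]
      · have he := Real.rpow_add h0 r 1
        rw [Real.rpow_one] at he
        rw [he]
    have hmul := mul_le_mul_of_nonneg_left h2 (Real.rpow_nonneg (norm_nonneg ξ) r)
    calc ‖ξ‖ ^ r * ‖u' t‖
        ≤ ‖ξ‖ ^ r * ((1 + Real.sqrt (3*H)) * (Real.exp (3*H/2) *
          (Real.sqrt H + 1 + Real.sqrt (3*H)/2)) *
          Real.exp (-(‖ξ‖ ^ 2 / 2) * ∫ τ in s..t, g τ) * (‖ξ‖ * ‖u s‖ + ‖u' s‖)) := hmul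
      _ = (1 + Real.sqrt (3*H)) * (Real.exp (3*H/2) *
          (Real.sqrt H + 1 + Real.sqrt (3*H)/2)) *
          Real.exp (-(‖ξ‖ ^ 2 / 2) * ∫ τ in s..t, g τ) *
          (‖ξ‖ ^ r * ‖ξ‖ * ‖u s‖ + ‖ξ‖ ^ r * ‖u' s‖) := by ring
      _ = (1 + Real.sqrt (3*H)) * (Real.exp (3*H/2) *
          (Real.sqrt H + 1 + Real.sqrt (3*H)/2)) *
          Real.exp (-(‖ξ‖ ^ 2 / 2) * ∫ τ in s..t, g τ) *
          (‖ξ‖ ^ (r+1) * ‖u s‖ + ‖ξ‖ ^ r * ‖u' s‖) := by rw [hkr]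
      _ ≤ ((3 + Real.sqrt (3*H)) * (Real.exp (3*H/2) *
          (Real.sqrt H + 1 + Real.sqrt (3*H)/2)) + 1) *
          Real.exp (-(‖ξ‖ ^ 2 / 2) * ∫ τ in s..t, g τ) *
          (‖ξ‖ ^ (r+1) * ‖u s‖ + ‖ξ‖ ^ r * ‖u' s‖) := by
          apply mul_le_mul_of_nonneg_right _ (by positivity)
          apply mul_le_mul_of_nonneg_right _ hAnn
          nlinarith [hKnn, hs3]
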